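/- (Paper's Corollary: even given the exact arrival time of the last request, there is no c-competitive algorithm for the OLTSP with c < 2.) There exists a geodesic metric space M with origin o such that for every advice-receiving online algorithm (ALG_τ)_{τ∈ℝ} and every real c < 2, there exists a nonempty finite request sequence x with last release time t_n(x) such that the completion time produced by ALG_{t_n(x)} on x exceeds c · Z(x). In other words, a perfect prediction of the last arrival time does not allow any online algorithm to achieve a competitive ratio below 2. -/

import Mathlib

/-- Feasibility of a pair `(σ, T)` for a request sequence (given as a list) in a metric
space with origin `o`. -/
def FeasibleL {M : Type*} [MetricSpace M] (o : M) (x : List (ℝ × M))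
    (σ : ℝ → M) (T : ℝ) : Prop :=
  (LipschitzWith 1 σ ∧ ∀ s : ℝ, s ≤ 0 → σ s = o) ∧ 0 ≤ T ∧ σ T = o ∧
    ∀ r ∈ x, ∃ s : ℝ, r.1 ≤ s ∧ s ≤ T ∧ σ s = r.2

/-- The optimal offline completion time of a request sequence. -/
noncomputable def ZL {M : Type*} [MetricSpace M] (o : M) (x : List (ℝ × M)) : ℝ :=
  sInf {T : ℝ | ∃ σ : ℝ → M, FeasibleL o x σ T}

/-- `M` is geodesic: any two points are joined by a unit-speed geodesic. -/
def IsGeodesicSpace (M : Type*) [MetricSpace M] : Prop :=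
  ∀ a b : M, ∃ γ : ℝ → M, LipschitzWith 1 γ ∧ γ 0 = a ∧ γ (dist a b) = b

/-- A causal online algorithm: it assigns to every request sequence a feasible pair
(schedule, completion time), and whenever two request sequences contain exactly the same
requests with release time `≤ τ` (as multisets), the two schedules agree at all times
`≤ τ`. -/
structure OnlineAlg (M : Type*) [MetricSpace M] (o : M) where
  sched : List (ℝ × M) → ℝ → M
  time : List (ℝ × M) → ℝ
  feasible : ∀ x, FeasibleL o x (sched x) (time x)
  causal : ∀ (τ : ℝ) (x y : List (ℝ × M)),
    (x.filter fun r => decide (r.1 ≤ τ)).Perm (y.filter fun r => decide (r.1 ≤ τ)) →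
    ∀ s ≤ τ, sched x s = sched y s

namespace OLTSPLB


/-- Ambient space: bounded functions `ℕ → ℝ` with sup norm. -/
abbrev MM : Type := BoundedContinuousFunction ℕ ℝ

/-- The "tips": points at distance 1 from the origin `0`, pairwise at distance 2. -/
noncomputable def p (i : ℕ) : MM :=
  ⟨⟨fun k => if k = i then 1 else -1, continuous_of_discreteTopology⟩, 2, by
    intro x y
    dsimp
    rw [Real.dist_eq]
    split <;> split <;> norm_num⟩

lemma p_apply (i k : ℕ) : p i k = if k = i then 1 else -1 := rfl

lemma norm_p (i : ℕ) : ‖p i‖ = 1 := by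
  refine le_antisymm ?_ ?_
  · rw [BoundedContinuousFunction.norm_le (by norm_num)]
    intro k
    rw [p_apply]
    split <;> norm_num
  · calc (1:ℝ) = ‖p i i‖ := by rw [p_apply]; simp
      _ ≤ ‖p i‖ := BoundedContinuousFunction.norm_coe_le_norm _ _

lemma dist_p_zero (i : ℕ) : dist (p i) (0 : MM) = 1 := by
  rw [dist_zero_right, norm_p]

lemma p_ne_zero (i : ℕ) : p i ≠ 0 := by
  intro h
  have := norm_p i
  rw [h, norm_zero] at this
  norm_num at this

lemma dist_p (i j : ℕ) (h : i ≠ j) : 2 ≤ dist (p i) (p j) := by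
  have h1 : dist (p i j) (p j j) ≤ dist (p i) (p j) :=
    BoundedContinuousFunction.dist_coe_le_dist j
  rw [p_apply, p_apply, if_neg (Ne.symm h), if_pos rfl, Real.dist_eq] at h1
  norm_num at h1
  linarith

lemma p_injective : Function.Injective p := by
  intro i j h
  by_contra hne
  have := dist_p i j hne
  rw [h, dist_self] at this
  norm_num at this

/-- every real normed space is geodesic. -/
lemma normed_geodesic {E : Type} [NormedAddCommGroup E] [NormedSpace ℝ E] :
    ∀ a b : E, ∃ γ : ℝ → E, LipschitzWith 1 γ ∧ γ 0 = a ∧ γ (dist a b) = b := by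
  intro a b
  by_cases h : a = b
  · exact ⟨fun _ => a, (LipschitzWith.const a).weaken (zero_le_one),
      rfl, by rw [h]⟩
  · have hd : 0 < dist a b := dist_pos.mpr h
    refine ⟨fun t => a + (t / dist a b) • (b - a), ?_, by simp, ?_⟩
    · apply LipschitzWith.of_dist_le_mul
      intro s t
      rw [dist_eq_norm]
      have : a + (s / dist a b) • (b - a) - (a + (t / dist a b) • (b - a))
          = ((s - t) / dist a b) • (b - a) := by
        rw [sub_div, sub_smul]; abel
      rw [this, norm_smul, Real.norm_eq_abs, abs_div, abs_of_pos hd]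
      rw [div_mul_eq_mul_div, ← dist_eq_norm, dist_comm b a]
      rw [mul_div_assoc, div_self (ne_of_gt hd), mul_one]
      rw [NNReal.coe_one, one_mul, Real.dist_eq]
    · show a + (dist a b / dist a b) • (b - a) = b
      rw [div_self (ne_of_gt hd), one_smul]; abel

/-! ### bump excursions -/

noncomputable def bump (v t : ℝ) : ℝ := max 0 (1 - |t - v|)

lemma bump_nonneg (v t : ℝ) : 0 ≤ bump v t := le_max_left _ _

lemma bump_le_one (v t : ℝ) : bump v t ≤ 1 := by
  apply max_le (by norm_num)
  have := abs_nonneg (t - v); linarith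

lemma bump_self (v : ℝ) : bump v v = 1 := by
  simp [bump]

lemma bump_eq_zero (v t : ℝ) (h : 1 ≤ |t - v|) : bump v t = 0 := by
  apply max_eq_left; linarith

lemma bump_ne_zero (v t : ℝ) (h : bump v t ≠ 0) : |t - v| < 1 := by
  by_contra h'
  exact h (bump_eq_zero v t (not_lt.mp h'))

lemma bump_pos_val (v t : ℝ) (h : bump v t ≠ 0) : bump v t = 1 - |t - v| := by
  have := bump_ne_zero v t h
  apply max_eq_right; linarith

lemma bump_zero_le (v t : ℝ) (h : bump v t = 0) : 1 ≤ |t - v| := by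
  unfold bump at h
  rw [max_eq_left_iff] at h
  linarith

lemma bump_lip (v s t : ℝ) : |bump v s - bump v t| ≤ |s - t| := by
  unfold bump
  rw [max_comm 0 (1 - |s - v|), max_comm 0 (1 - |t - v|)]
  calc |(1 - |s - v|) ⊔ 0 - (1 - |t - v|) ⊔ 0| ≤ |(1 - |s - v|) - (1 - |t - v|)| :=
        abs_max_sub_max_le_abs _ _ _
    _ = |(|t - v|) - (|s - v|)| := by congr 1; ring
    _ ≤ |t - v - (s - v)| := abs_abs_sub_abs_le_abs_sub _ _
    _ = |t - s| := by congr 1; ring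
    _ = |s - t| := abs_sub_comm _ _


section Tour


variable {E : Type} [NormedAddCommGroup E] [NormedSpace ℝ E]

noncomputable def tour (n : ℕ) (v : ℕ → ℝ) (q : ℕ → E) (t : ℝ) : E :=
  ∑ k ∈ Finset.range n, bump (v k) t • q k

variable {n : ℕ} {v : ℕ → ℝ} {q : ℕ → E}

lemma active_unique (hsep : ∀ k < n, ∀ k' < n, k ≠ k' → 2 ≤ |v k - v k'|)
    {r : ℝ} {k k' : ℕ} (hk : k < n) (hk' : k' < n)
    (h1 : bump (v k) r ≠ 0) (h2 : bump (v k') r ≠ 0) : k = k' := by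
  by_contra hne
  have hs := hsep k hk k' hk' hne
  have a1 := bump_ne_zero _ _ h1
  have a2 := bump_ne_zero _ _ h2
  have : |v k - v k'| ≤ |r - v k| + |r - v k'| := by
    calc |v k - v k'| = |(r - v k') - (r - v k)| := by congr 1; ring
      _ ≤ |r - v k'| + |r - v k| := abs_sub _ _
      _ = |r - v k| + |r - v k'| := by ring
  linarith

lemma tour_eq_zero (t : ℝ) (h : ∀ k < n, 1 ≤ |t - v k|) : tour n v q t = 0 := by
  apply Finset.sum_eq_zero
  intro k hk
  rw [bump_eq_zero _ _ (h k (Finset.mem_range.mp hk)), zero_smul]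

lemma tour_apply_v (hsep : ∀ k < n, ∀ k' < n, k ≠ k' → 2 ≤ |v k - v k'|)
    {k : ℕ} (hk : k < n) : tour n v q (v k) = q k := by
  rw [tour, Finset.sum_eq_single_of_mem k (Finset.mem_range.mpr hk)]
  · rw [bump_self, one_smul]
  · intro k' hk' hne
    rw [bump_eq_zero, zero_smul]
    have := hsep k' (Finset.mem_range.mp hk') k hk hne
    calc (1:ℝ) ≤ |v k' - v k| - 1 := by linarith
      _ ≤ |v k - v k'| := by rw [abs_sub_comm]; linarith [abs_nonneg (v k' - v k)]

lemma sum_bump_diff (hsep : ∀ k < n, ∀ k' < n, k ≠ k' → 2 ≤ |v k - v k'|)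
    {s t : ℝ} (hst : s ≤ t) :
    ∑ k ∈ Finset.range n, |bump (v k) s - bump (v k) t| ≤ t - s := by
  by_cases ha : ∃ k, k < n ∧ bump (v k) s ≠ 0
  · obtain ⟨a, han, ha0⟩ := ha
    have has := bump_ne_zero _ _ ha0
    by_cases hb : ∃ k, k < n ∧ bump (v k) t ≠ 0
    · obtain ⟨b, hbn, hb0⟩ := hb
      have hbt := bump_ne_zero _ _ hb0
      by_cases hab : a = b
      · subst hab
        rw [Finset.sum_eq_single_of_mem a (Finset.mem_range.mpr han)]
        · calc |bump (v a) s - bump (v a) t| ≤ |s - t| := bump_lip _ _ _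
            _ = t - s := by rw [abs_sub_comm, abs_of_nonneg (by linarith)]
        · intro k hk hne
          have hks : bump (v k) s = 0 := by
            by_contra h0
            exact hne (active_unique hsep (Finset.mem_range.mp hk) han h0 ha0)
          have hkt : bump (v k) t = 0 := by
            by_contra h0
            exact hne (active_unique hsep (Finset.mem_range.mp hk) hbn h0 hb0)
          rw [hks, hkt, sub_zero, abs_zero]
      · -- a ≠ b
        have hat : bump (v a) t = 0 := by
          by_contra h0
          exact hab (active_unique hsep han hbn h0 hb0)
        have hbs : bump (v b) s = 0 := by
          by_contra h0
          exact hab (active_unique hsep han hbn ha0 h0 ▸ rfl)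
        -- order: v a + 2 ≤ v b
        have horder : v a + 2 ≤ v b := by
          have := hsep a han b hbn hab
          rcases abs_cases (v a - v b) with ⟨he, _⟩ | ⟨he, _⟩
          · exfalso
            rw [he] at this
            have h1 : |s - v a| < 1 := has
            have h2 : |t - v b| < 1 := hbt
            have := abs_lt.mp h1
            have := abs_lt.mp h2
            linarith
          · rw [he] at this; linarith
        have e1 : ∑ k ∈ Finset.range n, |bump (v k) s - bump (v k) t|
            = ∑ k ∈ ({a, b} : Finset ℕ), |bump (v k) s - bump (v k) t| := by
          symm
          apply Finset.sum_subset
          · intro k hk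
            rcases Finset.mem_insert.mp hk with h | h
            · exact Finset.mem_range.mpr (h ▸ han)
            · exact Finset.mem_range.mpr ((Finset.mem_singleton.mp h) ▸ hbn)
          · intro k hk hknot
            have hka : k ≠ a := fun h => hknot (by simp [h])
            have hkb : k ≠ b := fun h => hknot (by simp [h])
            have hks : bump (v k) s = 0 := by
              by_contra h0
              exact hka (active_unique hsep (Finset.mem_range.mp hk) han h0 ha0)
            have hkt : bump (v k) t = 0 := by
              by_contra h0
              exact hkb (active_unique hsep (Finset.mem_range.mp hk) hbn h0 hb0)
            rw [hks, hkt, sub_zero, abs_zero]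
        rw [e1, Finset.sum_pair hab, hat, hbs, sub_zero, zero_sub, abs_neg,
          abs_of_nonneg (bump_nonneg _ _), abs_of_nonneg (bump_nonneg _ _)]
        have c1 : bump (v a) s ≤ 1 - (s - v a) := by
          rw [bump_pos_val _ _ ha0]
          have := le_abs_self (s - v a); linarith
        have c2 : bump (v b) t ≤ 1 - (v b - t) := by
          rw [bump_pos_val _ _ hb0]
          have := neg_abs_le (t - v b); linarith
        linarith
    · -- only s active
      push_neg at hb
      rw [Finset.sum_eq_single_of_mem a (Finset.mem_range.mpr han)]
      · rw [hb a han, sub_zero, abs_of_nonneg (bump_nonneg _ _)]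
        have hat : bump (v a) t = 0 := hb a han
        have h1 : 1 ≤ |t - v a| := bump_zero_le _ _ hat
        have h2 := abs_lt.mp has
        have h3 : v a + 1 ≤ t := by
          rcases abs_cases (t - v a) with ⟨he, _⟩ | ⟨he, _⟩
          · rw [he] at h1; linarith
          · rw [he] at h1; linarith
        rw [bump_pos_val _ _ ha0]
        have := le_abs_self (s - v a); linarith
      · intro k hk hne
        have hks : bump (v k) s = 0 := by
          by_contra h0
          exact hne (active_unique hsep (Finset.mem_range.mp hk) han h0 ha0)
        rw [hks, hb k (Finset.mem_range.mp hk), sub_zero, abs_zero]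
  · push_neg at ha
    by_cases hb : ∃ k, k < n ∧ bump (v k) t ≠ 0
    · obtain ⟨b, hbn, hb0⟩ := hb
      have hbt := abs_lt.mp (bump_ne_zero _ _ hb0)
      rw [Finset.sum_eq_single_of_mem b (Finset.mem_range.mpr hbn)]
      · rw [ha b hbn, zero_sub, abs_neg, abs_of_nonneg (bump_nonneg _ _)]
        have h1 : 1 ≤ |s - v b| := bump_zero_le _ _ (ha b hbn)
        have h3 : s ≤ v b - 1 := by
          rcases abs_cases (s - v b) with ⟨he, _⟩ | ⟨he, _⟩
          · rw [he] at h1; linarith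
          · rw [he] at h1; linarith
        rw [bump_pos_val _ _ hb0]
        have := neg_abs_le (t - v b); linarith
      · intro k hk hne
        have hkt : bump (v k) t = 0 := by
          by_contra h0
          exact hne (active_unique hsep (Finset.mem_range.mp hk) hbn h0 hb0)
        rw [hkt, ha k (Finset.mem_range.mp hk), sub_zero, abs_zero]
    · push_neg at hb
      have : ∀ k ∈ Finset.range n, |bump (v k) s - bump (v k) t| = 0 := by
        intro k hk
        rw [ha k (Finset.mem_range.mp hk), hb k (Finset.mem_range.mp hk), sub_zero, abs_zero]
      rw [Finset.sum_congr rfl this, Finset.sum_const, smul_zero]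
      linarith

lemma tour_lipschitz (hsep : ∀ k < n, ∀ k' < n, k ≠ k' → 2 ≤ |v k - v k'|)
    (hq : ∀ k < n, ‖q k‖ ≤ 1) : LipschitzWith 1 (tour n v q) := by
  apply LipschitzWith.of_dist_le_mul
  have key : ∀ s t : ℝ, s ≤ t → dist (tour n v q s) (tour n v q t) ≤ t - s := by
    intro s t hst
    rw [dist_eq_norm]
    have : tour n v q s - tour n v q t
        = ∑ k ∈ Finset.range n, (bump (v k) s - bump (v k) t) • q k := by
      rw [tour, tour, ← Finset.sum_sub_distrib]
      congr 1
      funext k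
      rw [sub_smul]
    rw [this]
    calc ‖∑ k ∈ Finset.range n, (bump (v k) s - bump (v k) t) • q k‖
        ≤ ∑ k ∈ Finset.range n, ‖(bump (v k) s - bump (v k) t) • q k‖ :=
          norm_sum_le _ _
      _ ≤ ∑ k ∈ Finset.range n, |bump (v k) s - bump (v k) t| := by
          apply Finset.sum_le_sum
          intro k hk
          rw [norm_smul, Real.norm_eq_abs]
          calc |bump (v k) s - bump (v k) t| * ‖q k‖
              ≤ |bump (v k) s - bump (v k) t| * 1 := by
                apply mul_le_mul_of_nonneg_left (hq k (Finset.mem_range.mp hk)) (abs_nonneg _)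
            _ = _ := mul_one _
      _ ≤ t - s := sum_bump_diff hsep hst
  intro s t
  rw [NNReal.coe_one, one_mul, Real.dist_eq]
  rcases le_total s t with h | h
  · calc dist (tour n v q s) (tour n v q t) ≤ t - s := key s t h
      _ ≤ |s - t| := by rw [abs_sub_comm, abs_of_nonneg (by linarith)]
  · calc dist (tour n v q s) (tour n v q t) = dist (tour n v q t) (tour n v q s) := dist_comm _ _
      _ ≤ s - t := key t s h
      _ ≤ |s - t| := by rw [abs_of_nonneg (by linarith)]

end Tour

/-- In a finite set of reals pairwise ≥ 2 apart and all > lb, some element exceeds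
`lb + 2 * card - 2`. -/
lemma exists_big (u : ℕ → ℝ) (lb : ℝ) :
    ∀ F : Finset ℕ, F.Nonempty → (∀ i ∈ F, ∀ j ∈ F, i ≠ j → 2 ≤ |u i - u j|) →
    (∀ i ∈ F, lb < u i) → ∃ i ∈ F, lb + 2 * F.card < u i + 2 := by
  intro F
  induction F using Finset.strongInduction with
  | _ F ih =>
    intro hne hsep hlb
    obtain ⟨a, ha, hamax⟩ := F.exists_max_image u hne
    by_cases h1 : F.card ≤ 1
    · have hcard : F.card = 1 := le_antisymm h1 (Finset.card_pos.mpr hne)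
      refine ⟨a, ha, ?_⟩
      rw [hcard]
      push_cast
      linarith [hlb a ha]
    · push_neg at h1
      have hne' : (F.erase a).Nonempty := by
        rw [← Finset.card_pos, Finset.card_erase_of_mem ha]
        omega
      obtain ⟨b, hb, hbig⟩ := ih (F.erase a) (Finset.erase_ssubset ha) hne'
        (fun i hi j hj hij => hsep i (Finset.mem_of_mem_erase hi) j (Finset.mem_of_mem_erase hj) hij)
        (fun i hi => hlb i (Finset.mem_of_mem_erase hi))
      have hba : b ≠ a := Finset.ne_of_mem_erase hb
      have hub : u b ≤ u a := hamax b (Finset.mem_of_mem_erase hb)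
      have h2 : u b + 2 ≤ u a := by
        have hs := hsep b (Finset.mem_of_mem_erase hb) a ha hba
        rcases abs_cases (u b - u a) with ⟨he, _⟩ | ⟨he, _⟩
        · rw [he] at hs; linarith
        · rw [he] at hs; linarith
      refine ⟨a, ha, ?_⟩
      have hcard : F.card = (F.erase a).card + 1 := (Finset.card_erase_add_one ha).symm
      rw [hcard]
      push_cast
      push_cast at hbig
      linarith


section Adversary

variable (A : ℝ → OnlineAlg MM 0) (n : ℕ)

def mn : ℕ := 2 * n - 3

noncomputable def tnn : ℝ := (mn n : ℝ) + 1/2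

open Classical in
noncomputable def LL : ℕ → List (ℝ × MM)
  | 0 => (List.range n).map fun i => ((0:ℝ), p i)
  | (j+1) =>
    LL j ++
      (if h : ∃ i, i < n ∧ ∃ s : ℝ, (j:ℝ) < s ∧ s ≤ (j:ℝ)+1 ∧
          (A (tnn n)).sched (LL j) s = p i then
        [(((j:ℝ) + 3/2 : ℝ), p h.choose)]
      else [])

noncomputable def xx : List (ℝ × MM) := LL A n (mn n) ++ [(tnn n, (0:MM))]

lemma LL_rel : ∀ j, ∀ e ∈ LL A n j, 0 ≤ e.1 ∧ e.1 ≤ (j:ℝ) + 1/2 := by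
  intro j
  induction j with
  | zero =>
    intro e he
    simp only [LL, List.mem_map, List.mem_range] at he
    obtain ⟨i, _, rfl⟩ := he
    norm_num
  | succ j ih =>
    intro e he
    rw [LL] at he
    rcases List.mem_append.mp he with h | h
    · have := ih e h
      constructor
      · exact this.1
      · push_cast
        linarith [this.2]
    · split at h
      · rcases List.mem_singleton.mp h with rfl
        constructor
        · positivity
        · push_cast; linarith
      · simp at h

lemma LL_prefix : ∀ j j', j ≤ j' →
    ∃ t, LL A n j' = LL A n j ++ t ∧ ∀ e ∈ t, (j:ℝ) + 3/2 ≤ e.1 := by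
  intro j j' hjj
  induction j', hjj using Nat.le_induction with
  | base => exact ⟨[], by simp, by simp⟩
  | succ j' hjj ih =>
    obtain ⟨t, ht, hrel⟩ := ih
    rw [LL, ht]
    refine ⟨t ++ _, by rw [List.append_assoc], ?_⟩
    intro e he
    rcases List.mem_append.mp he with h | h
    · exact hrel e h
    · split at h
      · rcases List.mem_singleton.mp h with rfl
        show (j:ℝ) + 3/2 ≤ (j':ℝ) + 3/2
        have : (j:ℝ) ≤ (j':ℝ) := by exact_mod_cast hjj
        linarith
      · simp at h

lemma mem_LL_mem_xx {j : ℕ} (hj : j ≤ mn n) {e : ℝ × MM} (he : e ∈ LL A n j) :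
    e ∈ xx A n := by
  obtain ⟨t, ht, _⟩ := LL_prefix A n j (mn n) hj
  rw [xx, ht]
  exact List.mem_append_left _ (List.mem_append_left _ he)

lemma xx_decomp {j : ℕ} (hj : j < mn n) :
    ∃ t, xx A n = LL A n j ++ t ∧ ∀ e ∈ t, (j:ℝ) + 3/2 ≤ e.1 := by
  obtain ⟨t, ht, hrel⟩ := LL_prefix A n j (mn n) hj.le
  refine ⟨t ++ [(tnn n, 0)], by rw [xx, ht, List.append_assoc], ?_⟩
  intro e he
  rcases List.mem_append.mp he with h | h
  · exact hrel e h
  · rcases List.mem_singleton.mp h with rfl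
    show (j:ℝ) + 3/2 ≤ tnn n
    rw [tnn]
    have : (j:ℝ) + 1 ≤ (mn n : ℝ) := by exact_mod_cast hj
    linarith

lemma sched_agree {j : ℕ} (hj : j < mn n) :
    ∀ s : ℝ, s ≤ (j:ℝ) + 1 →
      (A (tnn n)).sched (xx A n) s = (A (tnn n)).sched (LL A n j) s := by
  intro s hs
  obtain ⟨t, ht, hrel⟩ := xx_decomp A n hj
  refine (A (tnn n)).causal ((j:ℝ)+1) _ _ ?_ s hs
  rw [ht, List.filter_append]
  have : t.filter (fun r => decide (r.1 ≤ (j:ℝ)+1)) = [] := by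
    rw [List.filter_eq_nil_iff]
    intro e he
    have := hrel e he
    simp only [decide_eq_true_eq]
    intro hc
    linarith
  rw [this, List.append_nil]

lemma xx_rel : ∀ e ∈ xx A n, 0 ≤ e.1 ∧ e.1 ≤ tnn n := by
  intro e he
  rcases List.mem_append.mp he with h | h
  · have := LL_rel A n (mn n) e h
    exact ⟨this.1, by rw [tnn]; exact this.2⟩
  · rcases List.mem_singleton.mp h with rfl
    refine ⟨?_, le_refl _⟩
    rw [tnn]
    positivity

lemma visit_mem {j : ℕ} (hj : j < mn n) {i : ℕ} (hi : i < n) {s : ℝ}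
    (hs1 : (j:ℝ) < s) (hs2 : s ≤ (j:ℝ)+1)
    (hvisit : (A (tnn n)).sched (xx A n) s = p i) :
    (((j:ℝ) + 3/2 : ℝ), p i) ∈ xx A n := by
  rw [sched_agree A n hj s hs2] at hvisit
  have hcond : ∃ i', i' < n ∧ ∃ s' : ℝ, (j:ℝ) < s' ∧ s' ≤ (j:ℝ)+1 ∧
      (A (tnn n)).sched (LL A n j) s' = p i' := ⟨i, hi, s, hs1, hs2, hvisit⟩
  have hLL : LL A n (j+1) = LL A n j ++ [(((j:ℝ) + 3/2 : ℝ), p hcond.choose)] := by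
    rw [LL, dif_pos hcond]
  obtain ⟨hcn, s', hs1', hs2', hv'⟩ := hcond.choose_spec
  have hlip := ((A (tnn n)).feasible (LL A n j)).1.1
  have hd : dist (p i) (p hcond.choose) ≤ 1 := by
    rw [← hvisit, ← hv']
    calc dist ((A (tnn n)).sched (LL A n j) s) ((A (tnn n)).sched (LL A n j) s')
        ≤ 1 * dist s s' := hlip.dist_le_mul s s'
      _ ≤ 1 := by
          rw [one_mul, Real.dist_eq, abs_le]
          constructor <;> linarith
  have hchoice : hcond.choose = i := by
    by_contra hne
    have := dist_p i hcond.choose (fun h => hne h.symm)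
    linarith
  have hmem : (((j:ℝ) + 3/2 : ℝ), p i) ∈ LL A n (j+1) := by
    rw [hLL, hchoice]
    exact List.mem_append_right _ (List.mem_singleton.mpr rfl)
  exact mem_LL_mem_xx A n (by omega) hmem

noncomputable def ell (i : ℕ) : ℝ := sSup {r : ℝ | (r, p i) ∈ xx A n}

lemma relSet_finite (i : ℕ) : {r : ℝ | (r, p i) ∈ xx A n}.Finite := by
  apply Set.Finite.subset ((xx A n).finite_toSet.image Prod.fst)
  intro r hr
  exact ⟨(r, p i), hr, rfl⟩

lemma base_mem {i : ℕ} (hi : i < n) : ((0:ℝ), p i) ∈ xx A n := by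
  apply mem_LL_mem_xx A n (Nat.zero_le _)
  rw [LL]
  exact List.mem_map.mpr ⟨i, List.mem_range.mpr hi, rfl⟩

lemma relSet_nonempty {i : ℕ} (hi : i < n) : {r : ℝ | (r, p i) ∈ xx A n}.Nonempty :=
  ⟨0, base_mem A n hi⟩

lemma ell_ge {i : ℕ} {r : ℝ} (hr : (r, p i) ∈ xx A n) : r ≤ ell A n i :=
  le_csSup ((relSet_finite A n i).bddAbove) hr

lemma ell_mem {i : ℕ} (hi : i < n) : (ell A n i, p i) ∈ xx A n :=
  Set.Nonempty.csSup_mem (relSet_nonempty A n hi) (relSet_finite A n i)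

lemma ell_nonneg {i : ℕ} (hi : i < n) : 0 ≤ ell A n i :=
  ell_ge A n (base_mem A n hi)

lemma ell_le_tnn {i : ℕ} (hi : i < n) : ell A n i ≤ tnn n :=
  (xx_rel A n _ (ell_mem A n hi)).2

lemma exists_window {s : ℝ} (h0 : 0 < s) (hm : s ≤ (mn n : ℝ)) :
    ∃ j : ℕ, j < mn n ∧ (j:ℝ) < s ∧ s ≤ (j:ℝ)+1 := by
  have hcl : 1 ≤ ⌈s⌉₊ := Nat.one_le_iff_ne_zero.mpr (by
    intro h
    have := Nat.le_ceil s
    rw [h] at this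
    push_cast at this
    linarith)
  have hle : ⌈s⌉₊ ≤ mn n := Nat.ceil_le.mpr hm
  refine ⟨⌈s⌉₊ - 1, by omega, ?_, ?_⟩
  · have h1 : ((⌈s⌉₊ - 1 : ℕ) : ℝ) = (⌈s⌉₊ : ℝ) - 1 := by
      push_cast [hcl]; ring
    rw [h1]
    have := Nat.ceil_lt_add_one h0.le
    linarith
  · have h1 : ((⌈s⌉₊ - 1 : ℕ) : ℝ) + 1 = (⌈s⌉₊ : ℝ) := by
      push_cast [hcl]; ring
    rw [h1]
    exact Nat.le_ceil s

lemma pending_key {i : ℕ} (hi : i < n) {s : ℝ} (h1 : ell A n i ≤ s) (h2 : s ≤ tnn n)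
    (hv : (A (tnn n)).sched (xx A n) s = p i) : (mn n : ℝ) < s := by
  by_contra hc
  push_neg at hc
  have hs0 : 0 < s := by
    rcases lt_or_ge 0 s with h | h
    · exact h
    · exfalso
      have := ((A (tnn n)).feasible (xx A n)).1.2 s h
      rw [hv] at this
      exact p_ne_zero i this
  obtain ⟨j, hj, hw1, hw2⟩ := exists_window n hs0 hc
  have hmem := visit_mem A n hj hi hw1 hw2 hv
  have := ell_ge A n hmem
  have : (j:ℝ) + 3/2 ≤ s := le_trans this h1
  linarith


lemma mem_LL_cases : ∀ j, ∀ e ∈ LL A n j,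
    (∃ i, i < n ∧ e = ((0:ℝ), p i)) ∨
    (∃ j' : ℕ, j' < j ∧ ∃ i, i < n ∧ e = (((j':ℝ) + 3/2 : ℝ), p i) ∧
      ∃ s, (j':ℝ) < s ∧ s ≤ (j':ℝ)+1 ∧ (A (tnn n)).sched (LL A n j') s = p i) := by
  intro j
  induction j with
  | zero =>
    intro e he
    simp only [LL, List.mem_map, List.mem_range] at he
    obtain ⟨i, hi, rfl⟩ := he
    exact Or.inl ⟨i, hi, rfl⟩
  | succ j ih =>
    intro e he
    rw [LL] at he
    rcases List.mem_append.mp he with h | h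
    · rcases ih e h with h' | ⟨j', hj', rest⟩
      · exact Or.inl h'
      · exact Or.inr ⟨j', by omega, rest⟩
    · split at h
      · next hcond =>
        rcases List.mem_singleton.mp h with rfl
        obtain ⟨hcn, s, hs1, hs2, hv⟩ := hcond.choose_spec
        exact Or.inr ⟨j, by omega, hcond.choose, hcn, rfl, s, hs1, hs2, hv⟩
      · simp at h

lemma mem_xx_cases : ∀ e ∈ xx A n,
    e = (tnn n, (0:MM)) ∨
    (∃ i, i < n ∧ e = ((0:ℝ), p i)) ∨
    (∃ j' : ℕ, j' < mn n ∧ ∃ i, i < n ∧ e = (((j':ℝ) + 3/2 : ℝ), p i) ∧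
      ∃ s, (j':ℝ) < s ∧ s ≤ (j':ℝ)+1 ∧ (A (tnn n)).sched (xx A n) s = p i) := by
  intro e he
  rcases List.mem_append.mp he with h | h
  · rcases mem_LL_cases A n (mn n) e h with h' | ⟨j', hj', i, hi, he', s, hs1, hs2, hv⟩
    · exact Or.inr (Or.inl h')
    · refine Or.inr (Or.inr ⟨j', hj', i, hi, he', s, hs1, hs2, ?_⟩)
      rw [sched_agree A n hj' s hs2]
      exact hv
  · exact Or.inl (List.mem_singleton.mp h)

lemma ell_sep {i i' : ℕ} (hi : i < n) (hi' : i' < n) (hne : i ≠ i')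
    (hp : 0 < ell A n i) (hp' : 0 < ell A n i') : 2 ≤ |ell A n i - ell A n i'| := by
  have key : ∀ i₀, i₀ < n → 0 < ell A n i₀ → ∃ j : ℕ, j < mn n ∧
      ell A n i₀ = (j:ℝ) + 3/2 ∧
      ∃ s, (j:ℝ) < s ∧ s ≤ (j:ℝ)+1 ∧ (A (tnn n)).sched (xx A n) s = p i₀ := by
    intro i₀ hi₀ hpos
    rcases mem_xx_cases A n _ (ell_mem A n hi₀) with h | ⟨i₁, _, he⟩ | ⟨j, hj, i₁, hi₁, he, s, hs1, hs2, hv⟩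
    · exfalso
      have : p i₀ = 0 := congrArg Prod.snd h
      exact p_ne_zero i₀ this
    · exfalso
      have : ell A n i₀ = 0 := congrArg Prod.fst he
      linarith
    · have hpp : p i₁ = p i₀ := (congrArg Prod.snd he).symm
      have : i₁ = i₀ := p_injective hpp
      subst this
      exact ⟨j, hj, congrArg Prod.fst he, s, hs1, hs2, hv⟩
  obtain ⟨j, hj, hej, s, hs1, hs2, hv⟩ := key i hi hp
  obtain ⟨j', hj'2, hej', s', hs1', hs2', hv'⟩ := key i' hi' hp'
  have hlip := ((A (tnn n)).feasible (xx A n)).1.1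
  have hdist : 2 ≤ |s - s'| := by
    have h1 := dist_p i i' hne
    have h2 : dist (p i) (p i') ≤ 1 * dist s s' := by
      rw [← hv, ← hv']
      exact hlip.dist_le_mul s s'
    rw [one_mul, Real.dist_eq] at h2
    linarith
  have hcast : ∀ a b : ℕ, (a:ℝ) + 1 < (b:ℝ) → (a:ℝ) + 2 ≤ (b:ℝ) := by
    intro a b h
    have : a + 1 < b := by exact_mod_cast h
    have : a + 2 ≤ b := by omega
    exact_mod_cast this
  rw [hej, hej']
  rcases abs_cases (s - s') with ⟨hc, _⟩ | ⟨hc, _⟩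
  · rw [hc] at hdist
    have : (j':ℝ) + 1 < (j:ℝ) := by linarith
    have := hcast j' j this
    rw [abs_of_nonneg (by linarith)]
    linarith
  · rw [hc] at hdist
    have : (j:ℝ) + 1 < (j':ℝ) := by linarith
    have := hcast j j' this
    rw [abs_of_nonpos (by linarith)]
    linarith

lemma alg_bound (hn : 3 ≤ n) :
    tnn n + 2*(n:ℝ) - 3 < (A (tnn n)).time (xx A n) := by
  classical
  set T := (A (tnn n)).time (xx A n) with hT
  have feas := (A (tnn n)).feasible (xx A n)
  have H : ∀ i, i < n → ∃ s, ell A n i ≤ s ∧ s ≤ T ∧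
      (A (tnn n)).sched (xx A n) s = p i := by
    intro i hi
    exact feas.2.2.2 (ell A n i, p i) (ell_mem A n hi)
  choose! w hw1 hw2 hw3 using H
  have hlip := feas.1.1
  have wsep : ∀ i, i < n → ∀ j, j < n → i ≠ j → 2 ≤ |w i - w j| := by
    intro i hi j hj hij
    have h1 := dist_p i j hij
    have h2 : dist (p i) (p j) ≤ 1 * dist (w i) (w j) := by
      rw [← hw3 i hi, ← hw3 j hj]
      exact hlip.dist_le_mul _ _
    rw [one_mul, Real.dist_eq] at h2
    linarith
  set S := (Finset.range n).filter (fun i => w i ≤ tnn n) with hS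
  have hScard : S.card ≤ 1 := by
    rw [Finset.card_le_one]
    intro a ha b hb
    rw [hS, Finset.mem_filter, Finset.mem_range] at ha hb
    by_contra hne
    have hma := pending_key A n ha.1 (hw1 a ha.1) ha.2 (hw3 a ha.1)
    have hmb := pending_key A n hb.1 (hw1 b hb.1) hb.2 (hw3 b hb.1)
    have h2 := wsep a ha.1 b hb.1 hne
    have ha' := ha.2
    have hb' := hb.2
    rw [tnn] at ha' hb'
    rcases abs_cases (w a - w b) with ⟨hc, _⟩ | ⟨hc, _⟩ <;> rw [hc] at h2 <;> linarith
  set G := (Finset.range n).filter (fun i => ¬ (w i ≤ tnn n)) with hG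
  have hcards : S.card + G.card = n := by
    rw [hS, hG, Finset.card_filter_add_card_filter_not, Finset.card_range]
  have hGcard : n - 1 ≤ G.card := by omega
  have hGne : G.Nonempty := by
    rw [← Finset.card_pos]
    omega
  obtain ⟨i, hiG, hbig⟩ := exists_big w (tnn n) G hGne
    (fun a ha b hb hab => wsep a (Finset.mem_range.mp (Finset.mem_filter.mp ha).1)
      b (Finset.mem_range.mp (Finset.mem_filter.mp hb).1) hab)
    (fun a ha => not_le.mp (Finset.mem_filter.mp ha).2)
  have hin : i < n := Finset.mem_range.mp (Finset.mem_filter.mp hiG).1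
  have hTi : w i + 1 ≤ T := by
    have h0 : dist (p i) ((A (tnn n)).sched (xx A n) T) ≤ 1 * dist (w i) T := by
      rw [← hw3 i hin]
      exact hlip.dist_le_mul _ _
    have h0' : (A (tnn n)).sched (xx A n) T = 0 := feas.2.2.1
    rw [h0', one_mul, Real.dist_eq, dist_zero_right, norm_p] at h0
    have := hw2 i hin
    rw [abs_of_nonpos (by linarith)] at h0
    linarith
  have hGR : (n:ℝ) - 1 ≤ (G.card : ℝ) := by
    have : ((n - 1 : ℕ) : ℝ) ≤ (G.card : ℝ) := by exact_mod_cast hGcard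
    have h1 : ((n - 1 : ℕ) : ℝ) = (n:ℝ) - 1 := by
      have : 1 ≤ n := by omega
      push_cast [this]; ring
    linarith
  linarith


lemma mn_cast (hn : 3 ≤ n) : (mn n : ℝ) = 2*(n:ℝ) - 3 := by
  rw [mn]
  have h : 3 ≤ 2*n := by omega
  push_cast [h]
  ring

def rord (a b : ℕ) : Prop :=
  ell A n a < ell A n b ∨ (ell A n a = ell A n b ∧ a ≤ b)

lemma rord_trans : IsTrans ℕ (rord A n) := by
  constructor
  rintro a b c (h1 | ⟨h1, h1'⟩) (h2 | ⟨h2, h2'⟩)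
  · exact Or.inl (lt_trans h1 h2)
  · exact Or.inl (h2 ▸ h1)
  · exact Or.inl (h1 ▸ h2)
  · exact Or.inr ⟨h1.trans h2, h1'.trans h2'⟩

lemma rord_antisymm : IsAntisymm ℕ (rord A n) := by
  constructor
  rintro a b (h1 | ⟨h1, h1'⟩) (h2 | ⟨h2, h2'⟩)
  · exact absurd (lt_trans h1 h2) (lt_irrefl _)
  · exact absurd h1 (h2 ▸ lt_irrefl _)
  · exact absurd h2 (h1 ▸ lt_irrefl _)
  · omega

lemma rord_total : IsTotal ℕ (rord A n) := by
  constructor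
  intro a b
  rcases lt_trichotomy (ell A n a) (ell A n b) with h | h | h
  · exact Or.inl (Or.inl h)
  · rcases le_total a b with h' | h'
    · exact Or.inl (Or.inr ⟨h, h'⟩)
    · exact Or.inr (Or.inr ⟨h.symm, h'⟩)
  · exact Or.inr (Or.inl h)

noncomputable def tipList : List ℕ :=
  @Finset.sort ℕ (Finset.range n) (rord A n) (Classical.decRel _) (rord_trans A n)
    (rord_antisymm A n) (rord_total A n)

lemma tipList_length : (tipList A n).length = n := by
  rw [tipList]
  rw [@Finset.length_sort ℕ (Finset.range n) (rord A n) (Classical.decRel _) (rord_trans A n)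
    (rord_antisymm A n) (rord_total A n), Finset.card_range]

lemma tipList_sorted : List.Pairwise (rord A n) (tipList A n) :=
  @Finset.pairwise_sort ℕ (Finset.range n) (rord A n) (Classical.decRel _) (rord_trans A n)
    (rord_antisymm A n) (rord_total A n)

lemma tipList_nodup : (tipList A n).Nodup :=
  @Finset.sort_nodup ℕ (Finset.range n) (rord A n) (Classical.decRel _) (rord_trans A n)
    (rord_antisymm A n) (rord_total A n)

lemma tipList_mem {i : ℕ} : i ∈ tipList A n ↔ i < n := by
  rw [tipList]
  rw [@Finset.mem_sort ℕ (Finset.range n) (rord A n) (Classical.decRel _) (rord_trans A n)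
    (rord_antisymm A n) (rord_total A n), Finset.mem_range]

noncomputable def qq (k : ℕ) : ℕ := (tipList A n).getD k 0

lemma qq_get {k : ℕ} (hk : k < n) :
    qq A n k = (tipList A n).get ⟨k, by rw [tipList_length]; exact hk⟩ :=
  List.getD_eq_get (tipList A n) 0 ⟨k, by rw [tipList_length]; exact hk⟩

lemma qq_lt {k : ℕ} (hk : k < n) : qq A n k < n := by
  rw [← tipList_mem A n, qq_get A n hk]
  exact List.get_mem _ _

lemma qq_le {k k' : ℕ} (hk : k < k') (hk' : k' < n) :
    ell A n (qq A n k) ≤ ell A n (qq A n k') := by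
  have h := (tipList_sorted A n).rel_get_of_lt
    (a := ⟨k, by rw [tipList_length]; omega⟩)
    (b := ⟨k', by rw [tipList_length]; exact hk'⟩)
    (by simp [Fin.lt_def]; omega)
  rw [qq_get A n (by omega), qq_get A n hk']
  rcases h with h | ⟨h, _⟩
  · exact le_of_lt h
  · exact le_of_eq h

lemma qq_inj {k k' : ℕ} (hk : k < n) (hk' : k' < n) (h : qq A n k = qq A n k') :
    k = k' := by
  rw [qq_get A n hk, qq_get A n hk'] at h
  have := (List.nodup_iff_injective_get.mp (tipList_nodup A n)) h
  exact congrArg Fin.val this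

lemma qq_surj {i : ℕ} (hi : i < n) : ∃ k, k < n ∧ qq A n k = i := by
  have : i ∈ tipList A n := (tipList_mem A n).mpr hi
  obtain ⟨⟨k, hk⟩, hg⟩ := List.mem_iff_get.mp this
  have hkn : k < n := by rw [tipList_length] at hk; exact hk
  exact ⟨k, hkn, by rw [qq_get A n hkn]; exact hg⟩

noncomputable def vv (k : ℕ) : ℝ := max (2*(k:ℝ)+1) (ell A n (qq A n k) + 1)

lemma vv_lb (k : ℕ) : 2*(k:ℝ)+1 ≤ vv A n k := le_max_left _ _

lemma vv_ge1 (k : ℕ) : 1 ≤ vv A n k := by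
  have := vv_lb A n k
  have : (0:ℝ) ≤ (k:ℝ) := Nat.cast_nonneg _
  have := vv_lb A n k
  linarith

lemma vv_step {k : ℕ} (hk : k + 1 < n) : vv A n k + 2 ≤ vv A n (k+1) := by
  by_cases h : ell A n (qq A n k) + 1 ≤ 2*(k:ℝ)+1
  · have h1 : vv A n k = 2*(k:ℝ)+1 := max_eq_left h
    have h2 : 2*((k+1:ℕ):ℝ)+1 ≤ vv A n (k+1) := vv_lb A n (k+1)
    push_cast at h2
    linarith
  · push_neg at h
    have hq : 0 < ell A n (qq A n k) := by
      have : (0:ℝ) ≤ (k:ℝ) := Nat.cast_nonneg _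
      linarith
    have hle := qq_le A n (Nat.lt_succ_self k) hk
    have hne : qq A n k ≠ qq A n (k+1) := by
      intro hcc
      have := qq_inj A n (by omega) hk hcc
      omega
    have hq' : 0 < ell A n (qq A n (k+1)) := lt_of_lt_of_le hq hle
    have hsep := ell_sep A n (qq_lt A n (by omega)) (qq_lt A n hk) hne hq hq'
    have h2 : ell A n (qq A n k) + 2 ≤ ell A n (qq A n (k+1)) := by
      rcases abs_cases (ell A n (qq A n k) - ell A n (qq A n (k+1))) with ⟨hc, _⟩ | ⟨hc, _⟩ <;>
        rw [hc] at hsep <;> linarith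
    have h1 : vv A n k = ell A n (qq A n k) + 1 := max_eq_right (by linarith)
    have h3 : ell A n (qq A n (k+1)) + 1 ≤ vv A n (k+1) := le_max_right _ _
    linarith

lemma vv_lt : ∀ k' k, k < k' → k' < n → vv A n k + 2 ≤ vv A n k' := by
  intro k'
  induction k' with
  | zero => omega
  | succ j ih =>
    intro k hk hk'
    rcases Nat.lt_succ_iff_lt_or_eq.mp hk with h | h
    · have h1 := ih k h (by omega)
      have h2 := vv_step A n hk'
      linarith
    · subst h
      exact vv_step A n hk'

lemma vv_sep : ∀ k < n, ∀ k' < n, k ≠ k' → 2 ≤ |vv A n k - vv A n k'| := by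
  intro k hk k' hk' hne
  rcases lt_or_gt_of_ne hne with h | h
  · have := vv_lt A n k' k h hk'
    rw [abs_of_nonpos (by linarith)]
    linarith
  · have := vv_lt A n k k' h hk
    rw [abs_of_nonneg (by linarith)]
    linarith

lemma vv_le_end {k : ℕ} (hk : k < n) (hn : 1 ≤ n) : vv A n k ≤ vv A n (n-1) := by
  rcases Nat.lt_or_ge k (n-1) with h | h
  · have := vv_lt A n (n-1) k h (by omega)
    linarith
  · have : k = n - 1 := by omega
    rw [this]

noncomputable def optPath : ℝ → MM := tour n (vv A n) (fun k => p (qq A n k))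

noncomputable def ZZ : ℝ := vv A n (n-1) + 1

lemma ZZ_ge (hn : 3 ≤ n) : 2*(n:ℝ) ≤ ZZ A n := by
  rw [ZZ]
  have := vv_lb A n (n-1)
  have hc : ((n-1 : ℕ):ℝ) = (n:ℝ) - 1 := by
    have : 1 ≤ n := by omega
    push_cast [this]; ring
  rw [hc] at this
  linarith

lemma tnn_le_ZZ (hn : 3 ≤ n) : tnn n ≤ ZZ A n := by
  have h1 := ZZ_ge A n hn
  rw [tnn, mn_cast n hn]
  linarith

lemma opt_feasible (hn : 3 ≤ n) : FeasibleL (0:MM) (xx A n) (optPath A n) (ZZ A n) := by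
  have hn1 : 1 ≤ n := by omega
  refine ⟨⟨?_, ?_⟩, ?_, ?_, ?_⟩
  · exact tour_lipschitz (vv_sep A n) (fun k _ => le_of_eq (norm_p _))
  · intro s hs
    apply tour_eq_zero
    intro k hk
    have := vv_ge1 A n k
    rw [abs_of_nonpos (by linarith)]
    linarith
  · have := vv_ge1 A n (n-1)
    rw [ZZ]; linarith
  · apply tour_eq_zero
    intro k hk
    have h1 := vv_le_end A n hk hn1
    rw [ZZ, abs_of_nonneg (by linarith)]
    linarith
  · intro r hr
    rcases mem_xx_cases A n r hr with h | ⟨i, hi, h⟩ | ⟨j, hj, i, hi, h, _⟩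
    · refine ⟨ZZ A n, ?_, le_refl _, ?_⟩
      · rw [h]; exact tnn_le_ZZ A n hn
      · rw [h]
        apply tour_eq_zero
        intro k hk
        have h1 := vv_le_end A n hk hn1
        rw [ZZ, abs_of_nonneg (by linarith)]
        linarith
    · obtain ⟨k, hkn, hqk⟩ := qq_surj A n hi
      refine ⟨vv A n k, ?_, ?_, ?_⟩
      · rw [h]
        have := vv_ge1 A n k
        show (0:ℝ) ≤ vv A n k
        linarith
      · have := vv_le_end A n hkn hn1
        rw [ZZ]; linarith
      · rw [h]
        show optPath A n (vv A n k) = p i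
        rw [optPath, tour_apply_v (vv_sep A n) hkn, hqk]
    · obtain ⟨k, hkn, hqk⟩ := qq_surj A n hi
      refine ⟨vv A n k, ?_, ?_, ?_⟩
      · rw [h]
        show (j:ℝ) + 3/2 ≤ vv A n k
        have hmem : (((j:ℝ) + 3/2 : ℝ), p i) ∈ xx A n := h ▸ hr
        have h1 : (j:ℝ) + 3/2 ≤ ell A n i := ell_ge A n hmem
        have h2 : ell A n (qq A n k) + 1 ≤ vv A n k := le_max_right _ _
        rw [hqk] at h2
        linarith
      · have := vv_le_end A n hkn hn1
        rw [ZZ]; linarith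
      · rw [h]
        show optPath A n (vv A n k) = p i
        rw [optPath, tour_apply_v (vv_sep A n) hkn, hqk]

lemma ZZ_le (hn : 3 ≤ n) : ZZ A n ≤ 2*(n:ℝ) := by
  have hn1 : 1 ≤ n := by omega
  have hqlt : n - 1 < n := by omega
  have h1 : 2*((n-1 : ℕ):ℝ)+1 ≤ 2*(n:ℝ) - 1 := by push_cast [hn1]; linarith
  have h2 : ell A n (qq A n (n-1)) + 1 ≤ 2*(n:ℝ) - 1 := by
    have h3 := ell_le_tnn A n (qq_lt A n hqlt)
    rw [tnn, mn_cast n hn] at h3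
    linarith
  rw [ZZ, vv]
  have hmax := max_le h1 h2
  linarith

lemma ZL_le (hn : 3 ≤ n) : ZL (0:MM) (xx A n) ≤ 2*(n:ℝ) := by
  have hmem : ZZ A n ∈ {T : ℝ | ∃ σ : ℝ → MM, FeasibleL 0 (xx A n) σ T} :=
    ⟨optPath A n, opt_feasible A n hn⟩
  have hbdd : BddBelow {T : ℝ | ∃ σ : ℝ → MM, FeasibleL (0:MM) (xx A n) σ T} := by
    refine ⟨0, ?_⟩
    rintro T ⟨σ, hσ⟩
    exact hσ.2.1
  exact le_trans (csInf_le hbdd hmem) (ZZ_le A n hn)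

lemma ZL_nonneg : 0 ≤ ZL (0:MM) (xx A n) := by
  apply Real.sInf_nonneg
  rintro T ⟨σ, hσ⟩
  exact hσ.2.1

end Adversary

theorem main_statement :
    ∃ (M : Type) (inst : MetricSpace M) (o : M),
      (∀ a b : M, ∃ γ : ℝ → M, LipschitzWith 1 γ ∧ γ 0 = a ∧ γ (dist a b) = b) ∧
      ∀ (A : ℝ → @OnlineAlg M inst o) (c : ℝ), c < 2 →
        ∃ (x : List (ℝ × M)) (tn : ℝ), x ≠ [] ∧ (∀ r ∈ x, 0 ≤ r.1) ∧
          IsGreatest {t : ℝ | ∃ r ∈ x, r.1 = t} tn ∧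
          c * @ZL M inst o x < ((A tn).time x) := by
  refine ⟨MM, inferInstance, 0, normed_geodesic, ?_⟩
  intro A c hc
  set n : ℕ := max 3 ⌈3/(2-c)⌉₊ with hn_def
  have hn : 3 ≤ n := le_max_left _ _
  refine ⟨xx A n, tnn n, ?_, ?_, ?_, ?_⟩
  · rw [xx]
    simp
  · intro r hr
    exact (xx_rel A n r hr).1
  · constructor
    · exact ⟨(tnn n, 0), List.mem_append_right _ (List.mem_singleton.mpr rfl), rfl⟩
    · rintro t ⟨r, hr, rfl⟩
      exact (xx_rel A n r hr).2
  · have halg := alg_bound A n hn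
    have htnn : tnn n = 2*(n:ℝ) - 3 + 1/2 := by rw [tnn, mn_cast n hn]
    have hZle := ZL_le A n hn
    have hZ0 := ZL_nonneg A n
    rcases le_or_gt c 0 with hc0 | hc0
    · have h1 : c * ZL (0:MM) (xx A n) ≤ 0 := mul_nonpos_iff.mpr (Or.inr ⟨hc0, hZ0⟩)
      have h2 : (0:ℝ) < tnn n + 2*(n:ℝ) - 3 := by
        rw [htnn]
        have : (3:ℝ) ≤ (n:ℝ) := by exact_mod_cast hn
        linarith
      linarith
    · have hcn : 3/(2-c) ≤ (n:ℝ) := by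
        have h1 : (⌈3/(2-c)⌉₊ : ℝ) ≤ (n:ℝ) := by
          have := le_max_right 3 ⌈3/(2-c)⌉₊
          exact_mod_cast this
        linarith [Nat.le_ceil (3/(2-c))]
      have h2c : (0:ℝ) < 2 - c := by linarith
      have hkey : 3 ≤ (2-c) * (n:ℝ) := by
        rw [div_le_iff₀ h2c] at hcn
        linarith
      have h1 : c * ZL (0:MM) (xx A n) ≤ c * (2*(n:ℝ)) :=
        mul_le_mul_of_nonneg_left hZle (le_of_lt hc0)
      have h2 : c * (2*(n:ℝ)) ≤ 4*(n:ℝ) - 6 := by nlinarith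
      have h3 : (3:ℝ) ≤ (n:ℝ) := by exact_mod_cast hn
      linarith


end OLTSPLB

/-- Even given the exact arrival time of the last request as advice, no online algorithm
for the OLTSP is `c`-competitive for any `c < 2`: there is a geodesic metric space with an
origin in which, for every advice-receiving family of causal online algorithms
`(ALG_τ)_{τ ∈ ℝ}` and every `c < 2`, some nonempty request sequence `x` with last release
time `t_n` makes the completion time of `ALG_{t_n}` on `x` exceed `c · Z(x)`. -/
theorem last_arrival_prediction_lower_bound_two :
    ∃ (M : Type) (inst : MetricSpace M) (o : M),
      @IsGeodesicSpace M inst ∧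
      ∀ (A : ℝ → @OnlineAlg M inst o) (c : ℝ), c < 2 →
        ∃ (x : List (ℝ × M)) (tn : ℝ), x ≠ [] ∧ (∀ r ∈ x, 0 ≤ r.1) ∧
          IsGreatest {t : ℝ | ∃ r ∈ x, r.1 = t} tn ∧
          c * @ZL M inst o x < ((A tn).time x) :=
  OLTSPLB.main_statement
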